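/- Let n ≥ 2 and let P be a pairing involution on Fin n × Fin n (a square n×n pairing matrix). Then there exist a row i : Fin n and distinct columns j ≠ j' : Fin n such that (P (i,j)).1 = (P (i,j')).1. Consequently, the associated automaton B_C, whose output map at state i sends the letter j to (P (i,j)).1, is never invertible. -/
import Mathlib


/-- For a square `n × n` pairing involution (`n ≥ 2`), some row contains two distinct
columns whose partners lie in the same row; consequently the associated automaton
`B_C`, whose output map at state `i` sends `j` to `(P (i,j)).1`, is never invertible. -/
theorem square_pairing_BC_not_invertible (n : ℕ) (hn : 2 ≤ n)
    (P : Fin n × Fin n → Fin n × Fin n)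
    (hP_invol : ∀ p, P (P p) = p)
    (hP_nofix : ∀ p, P p ≠ p)
    (hP_row : ∀ p, (P p).1 ≠ p.1)
    (hP_col : ∀ p, (P p).2 ≠ p.2) :
    (∃ (i : Fin n) (j j' : Fin n), j ≠ j' ∧ (P (i, j)).1 = (P (i, j')).1) ∧
      ¬ ∀ i : Fin n, Function.Injective (fun j : Fin n => (P (i, j)).1) := by
  have key : ∀ i : Fin n, ¬ Function.Injective (fun j : Fin n => (P (i, j)).1) := by
    intro i hinj
    obtain ⟨j, hj⟩ := Finite.surjective_of_injective hinj i
    exact hP_row (i, j) hj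
  have h0 : 0 < n := by omega
  obtain ⟨a, b, hab, hne⟩ := Function.not_injective_iff.mp (key ⟨0, h0⟩)
  exact ⟨⟨⟨0, h0⟩, a, b, hne, hab⟩, fun h => key ⟨0, h0⟩ (h _)⟩
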